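/- Let Ψ be a sound class of weights (over Set) and T a Ψ-theory. Then every functor φ : T ⥤ Set that preserves Ψ-limits is Ψ-flat when regarded as a weight on Tᵒᵖ (i.e., Colim_φ : (Tᵒᵖ ⥤ Set) ⥤ Set preserves the ψ-weighted limits of all diagrams Dᵒᵖ ⥤ (Tᵒᵖ ⥤ Set), for all ψ in Ψ). Consequently, Ψ⁺(Tᵒᵖ) = Ψ-Alg(T) as full subcategories of the functor category [T, Set]. -/

import Mathlib

open CategoryTheory CategoryTheory.Limits Opposite
namespace Paper
abbrev elCat {E : Type} [SmallCategory E] (φ : Eᵒᵖ ⥤ Type) : Type :=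
  (Functor.Elements φ)ᵒᵖ
def elProj {E : Type} [SmallCategory E] (φ : Eᵒᵖ ⥤ Type) : elCat φ ⥤ E :=
  (CategoryOfElements.π φ).leftOp
noncomputable def wColim {E : Type} [SmallCategory E] (φ : Eᵒᵖ ⥤ Type) :
    (E ⥤ Type) ⥤ Type :=
  (Functor.whiskeringLeft (elCat φ) E Type).obj (elProj φ) ⋙ colim
def wLim {D E : Type} [SmallCategory D] [SmallCategory E]
    (ψ : Dᵒᵖ ⥤ Type) (G : Dᵒᵖ ⥤ E ⥤ Type) : E ⥤ Type :=
  G.flip ⋙ coyoneda.obj (op ψ)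
def wLimEval {D E : Type} [SmallCategory D] [SmallCategory E]
    (ψ : Dᵒᵖ ⥤ Type) (G : Dᵒᵖ ⥤ E ⥤ Type) (d : Dᵒᵖ) (y : ψ.obj d) :
    wLim ψ G ⟶ G.obj d where
  app _ := TypeCat.ofHom (fun α => α.app d y)
  naturality _ _ _ := rfl
def wLimComparison {D E : Type} [SmallCategory D] [SmallCategory E]
    (H : (E ⥤ Type) ⥤ Type) (ψ : Dᵒᵖ ⥤ Type) (G : Dᵒᵖ ⥤ E ⥤ Type) :
    H.obj (wLim ψ G) → (ψ ⟶ G ⋙ H) := fun z =>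
  { app := fun d => TypeCat.ofHom (fun y => H.map (wLimEval ψ G d y) z)
    naturality := fun d d' g => by
      ext y
      have h : wLimEval ψ G d' (ψ.map g y) = wLimEval ψ G d y ≫ G.map g := by
        ext e α
        exact ConcreteCategory.congr_hom (α.naturality g) y
      simp [h] }
structure Weight : Type 1 where
  D : Type
  [instD : SmallCategory D]
  w : Dᵒᵖ ⥤ Type
attribute [instance] Weight.instD
abbrev WeightClass : Type 1 := Weight → Prop
def IsFlat (Ψ : WeightClass) {E : Type} [SmallCategory E] (φ : Eᵒᵖ ⥤ Type) : Prop :=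
  ∀ W : Weight, Ψ W → ∀ G : W.Dᵒᵖ ⥤ E ⥤ Type,
    Function.Bijective (wLimComparison (wColim φ) W.w G)
def IsSound (Ψ : WeightClass) : Prop :=
  ∀ (E : Type) [SmallCategory E] (φ : Eᵒᵖ ⥤ Type),
    (∀ W : Weight, Ψ W → ∀ T : W.D ⥤ E,
      Function.Bijective (wLimComparison (wColim φ) W.w (T.op ⋙ coyoneda))) →
    IsFlat Ψ φ

/-- Given a weighted cone `p : ψ ⟶ T(L, G −)` on a diagram `G : Dᵒᵖ ⥤ T` with
vertex `L`, and a functor `φ : T ⥤ Set`, the induced map `φ(L) → Nat(ψ, φ ∘ G)`. -/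
def wConeMap {D T : Type} [SmallCategory D] [SmallCategory T]
    (ψ : Dᵒᵖ ⥤ Type) (G : Dᵒᵖ ⥤ T) (L : T)
    (p : ψ ⟶ G ⋙ coyoneda.obj (op L)) (φ : T ⥤ Type) (z : φ.obj L) :
    ψ ⟶ G ⋙ φ where
  app d := TypeCat.ofHom (fun y => φ.map (p.app d y) z)
  naturality d d' g := by
    ext y
    have h := ConcreteCategory.congr_hom (p.naturality g) y
    dsimp at h ⊢
    rw [h, φ.map_comp]
    rfl

/-- `p : ψ ⟶ T(L, G −)` exhibits `L` as the `ψ`-weighted limit of `G`: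
the induced maps `T(X, L) → Nat(ψ, T(X, G −))` are bijections. -/
def IsWLimCone {D T : Type} [SmallCategory D] [SmallCategory T]
    (ψ : Dᵒᵖ ⥤ Type) (G : Dᵒᵖ ⥤ T) (L : T)
    (p : ψ ⟶ G ⋙ coyoneda.obj (op L)) : Prop :=
  ∀ X : T, Function.Bijective (wConeMap ψ G L p (coyoneda.obj (op X)))

/-- A `Ψ`-theory: a small category with `ψ`-weighted limits for all `ψ` in `Ψ`. -/
def IsPsiTheory (Ψ : WeightClass) (T : Type) [SmallCategory T] : Prop :=
  ∀ W : Weight, Ψ W → ∀ G : W.Dᵒᵖ ⥤ T,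
    ∃ (L : T) (p : W.w ⟶ G ⋙ coyoneda.obj (op L)), IsWLimCone W.w G L p

/-- A functor `φ : T ⥤ Set` preserves `Ψ`-limits. -/
def PreservesPsiLimits (Ψ : WeightClass) {T : Type} [SmallCategory T]
    (φ : T ⥤ Type) : Prop :=
  ∀ W : Weight, Ψ W → ∀ (G : W.Dᵒᵖ ⥤ T) (L : T)
    (p : W.w ⟶ G ⋙ coyoneda.obj (op L)), IsWLimCone W.w G L p →
    Function.Bijective (wConeMap W.w G L p φ)

/-- The pointwise `γ`-weighted colimit of a diagram `H : J ⥤ [T, Set]`: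
`(Colim_γ H)(t) = Colim_γ (j ↦ H(j)(t))`. -/
noncomputable def pointwiseWColim {J T : Type} [SmallCategory J] [SmallCategory T]
    (γ : Jᵒᵖ ⥤ Type) (H : J ⥤ T ⥤ Type) : T ⥤ Type :=
  H.flip ⋙ wColim γ

/-- `Ψ⁺(Tᵒᵖ)`: the smallest replete full subcategory of `[T, Set]` containing the
representables and closed under `γ`-weighted colimits for all `Ψ`-flat weights `γ`. -/
inductive PsiPlusClosure (Ψ : WeightClass) (T : Type) [SmallCategory T] :
    (T ⥤ Type) → Prop
  | rep (t : T) : PsiPlusClosure Ψ T (coyoneda.obj (op t))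
  | iso {F G : T ⥤ Type} : PsiPlusClosure Ψ T F → Nonempty (F ≅ G) →
      PsiPlusClosure Ψ T G
  | wcolim (W : Weight) (hW : IsFlat Ψ W.w) (H : W.D ⥤ T ⥤ Type)
      (hH : ∀ j : W.D, PsiPlusClosure Ψ T (H.obj j)) :
      PsiPlusClosure Ψ T (pointwiseWColim W.w H)

/-- `Ψ(D)`: the free `Ψ`-cocompletion of `D` inside `[Dᵒᵖ, Set]`, i.e. the smallest
replete full subcategory containing the representables and closed under `ψ`-weighted
colimits for `ψ` in `Ψ`. -/
inductive PsiCocompletion (Ψ : WeightClass) (D : Type) [SmallCategory D] :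
    (Dᵒᵖ ⥤ Type) → Prop
  | rep (d : D) : PsiCocompletion Ψ D (yoneda.obj d)
  | iso {F G : Dᵒᵖ ⥤ Type} : PsiCocompletion Ψ D F → Nonempty (F ≅ G) →
      PsiCocompletion Ψ D G
  | wcolim (W : Weight) (hW : Ψ W) (H : W.D ⥤ Dᵒᵖ ⥤ Type)
      (hH : ∀ j : W.D, PsiCocompletion Ψ D (H.obj j)) :
      PsiCocompletion Ψ D (pointwiseWColim W.w H)

/-- `Ψ` is locally small: each `Ψ(D)` is essentially small. -/
def IsLocallySmall (Ψ : WeightClass) : Prop :=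
  ∀ (D : Type) [SmallCategory D], ∃ (ι : Type) (f : ι → (Dᵒᵖ ⥤ Type)),
    ∀ F : Dᵒᵖ ⥤ Type, PsiCocompletion Ψ D F → ∃ i : ι, Nonempty (F ≅ f i)

/-- `Ψ` is saturated: the objects of `Ψ(D)` are, up to isomorphism, exactly the
weights `Dᵒᵖ ⥤ Set` belonging to `Ψ`. -/
def IsSaturated (Ψ : WeightClass) : Prop :=
  ∀ (D : Type) [SmallCategory D] (F : Dᵒᵖ ⥤ Type),
    PsiCocompletion Ψ D F ↔ ∃ G : Dᵒᵖ ⥤ Type, Ψ (Weight.mk D G) ∧ Nonempty (F ≅ G)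

/-- The closure of `Ψ(D)` in `[Dᵒᵖ, Set]` under `γ`-weighted colimits for all
`Ψ`-flat weights `γ`. -/
inductive FlatClosure (Ψ : WeightClass) (D : Type) [SmallCategory D] :
    (Dᵒᵖ ⥤ Type) → Prop
  | base {F : Dᵒᵖ ⥤ Type} : PsiCocompletion Ψ D F → FlatClosure Ψ D F
  | iso {F G : Dᵒᵖ ⥤ Type} : FlatClosure Ψ D F → Nonempty (F ≅ G) → FlatClosure Ψ D G
  | wcolim (W : Weight) (hW : IsFlat Ψ W.w) (H : W.D ⥤ Dᵒᵖ ⥤ Type)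
      (hH : ∀ j : W.D, FlatClosure Ψ D (H.obj j)) :
      FlatClosure Ψ D (pointwiseWColim W.w H)

section Aux
variable {E : Type} [SmallCategory E]

lemma bij_of_comm {A B A' B' : Type} {f : A → B} {f' : A' → B'} (ea : A' → A) (eb : B' → B)
    (hea : Function.Bijective ea) (heb : Function.Bijective eb) (hf' : Function.Bijective f')
    (h : ∀ a, f (ea a) = eb (f' a)) : Function.Bijective f := by
  constructor
  · intro x y hxy
    obtain ⟨x', rfl⟩ := hea.2 x
    obtain ⟨y', rfl⟩ := hea.2 y
    rw [h, h] at hxy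
    exact congrArg ea (hf'.1 (heb.1 hxy))
  · intro b
    obtain ⟨b', rfl⟩ := heb.2 b
    obtain ⟨a', rfl⟩ := hf'.2 b'
    exact ⟨ea a', h a'⟩

/-- The tautological cocone exhibiting `φ(e)` as `Colim_φ E(e, −)`. -/
def coyCocone (φ : Eᵒᵖ ⥤ Type) (e : Eᵒᵖ) : Cocone (elProj φ ⋙ coyoneda.obj e) where
  pt := φ.obj e
  ι :=
    { app := fun A => TypeCat.ofHom (fun g => φ.map g.op A.unop.2)
      naturality := fun A B m => by
        ext g
        dsimp [elProj] at g ⊢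
        exact (FunctorToTypes.map_comp_apply φ _ g.op _).trans (congrArg (φ.map g.op) m.unop.2) }

def coyCoconeIsColimit (φ : Eᵒᵖ ⥤ Type) (e : Eᵒᵖ) : IsColimit (coyCocone φ e) where
  desc s := TypeCat.ofHom (fun y => s.ι.app (op (φ.elementsMk e y)) (𝟙 e.unop))
  fac s A := by
    ext g
    have hw := ConcreteCategory.congr_hom (s.w (Quiver.Hom.op
      (CategoryOfElements.homMk A.unop (φ.elementsMk e (φ.map g.op A.unop.2)) g.op rfl)))
      (𝟙 e.unop)
    dsimp [elProj, coyCocone] at hw ⊢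
    exact hw.symm.trans (congrArg (s.ι.app A) (Category.id_comp g))
  uniq s m hm := by
    ext y
    have h1 := ConcreteCategory.congr_hom (hm (op (φ.elementsMk e y))) (𝟙 e.unop)
    dsimp [coyCocone] at h1
    have h2 : φ.map (𝟙 e) y = y := ConcreteCategory.congr_hom (φ.map_id e) y
    exact (congrArg (fun x => m x) h2.symm).trans h1

/-- coYoneda: `Colim_φ E(e, −) ≅ φ(e)`, naturally in `e`. -/
noncomputable def coyIso (φ : Eᵒᵖ ⥤ Type) : coyoneda ⋙ wColim φ ≅ φ :=
  NatIso.ofComponents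
    (fun e => colimit.isoColimitCocone ⟨coyCocone φ e, coyCoconeIsColimit φ e⟩)
    (by
      intro e e' h
      dsimp [wColim]
      apply colimit.hom_ext
      intro A
      erw [ι_colimMap_assoc, colimit.isoColimitCocone_ι_hom,
        colimit.isoColimitCocone_ι_hom_assoc]
      ext g
      dsimp [coyCocone, elProj]
      exact FunctorToTypes.map_comp_apply φ g.op h _)

end Aux
section Aux2

/-- Composition with an isomorphism as an equivalence of hom-sets. -/
@[simps]
def compIsoEquiv {C : Type*} [Category C] {X Y Z : C} (i : Y ≅ Z) : (X ⟶ Y) ≃ (X ⟶ Z) where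
  toFun f := f ≫ i.hom
  invFun g := g ≫ i.inv
  left_inv f := by simp
  right_inv g := by simp

variable {D T : Type} [SmallCategory D] [SmallCategory T]
variable (ψ : Dᵒᵖ ⥤ Type) (S : D ⥤ Tᵒᵖ) (L : T)

/-- Unwrapping `Opposite` on hom-sets, naturally in `d`. -/
@[simps!]
def wrapIso (j : Tᵒᵖ) :
    (S.op ⋙ unopUnop T) ⋙ coyoneda.obj (op j.unop) ≅ (S.op ⋙ coyoneda).flip.obj j :=
  NatIso.ofComponents (fun d => Equiv.toIso Opposite.equivToOpposite)
    (fun g => by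
      ext f
      rfl)

def repConeHom (p : ψ ⟶ (S.op ⋙ unopUnop T) ⋙ coyoneda.obj (op L)) :
    (coyoneda.obj (op (op L)) : Tᵒᵖ ⥤ Type) ⟶ wLim ψ (S.op ⋙ coyoneda) where
  app j := TypeCat.ofHom (fun f =>
    { app := fun d => TypeCat.ofHom (fun y => (p.app d y).op ≫ f)
      naturality := fun d d' g => by
        ext y
        have hp := ConcreteCategory.congr_hom (p.naturality g) y
        dsimp at hp ⊢
        rw [hp, op_comp, Category.assoc]
        rfl })
  naturality j j' u := by
    ext f
    apply NatTrans.ext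
    ext d y
    exact (Category.assoc _ _ _).symm

lemma repConeHom_app_bijective (p : ψ ⟶ (S.op ⋙ unopUnop T) ⋙ coyoneda.obj (op L))
    (hp : IsWLimCone ψ (S.op ⋙ unopUnop T) L p) (j : Tᵒᵖ) :
    Function.Bijective ((repConeHom ψ S L p).app j) := by
  apply bij_of_comm (fun f₀ : j.unop ⟶ L => f₀.op)
    (fun α => α ≫ (wrapIso S j).hom)
    Quiver.Hom.opEquiv.bijective
    (compIsoEquiv (wrapIso S j)).bijective
    (hp j.unop)
  intro f₀
  ext d y
  exact op_comp.symm

end Aux2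
section Aux3
variable {T : Type} [SmallCategory T]

lemma flat_of_preserves (Ψ : WeightClass) (hΨ : IsSound Ψ) (hT : IsPsiTheory Ψ T)
    (φ : T ⥤ Type) (hφ : PreservesPsiLimits Ψ φ) : IsFlat Ψ (unopUnop T ⋙ φ) := by
  apply hΨ
  intro W hW S
  obtain ⟨L, p, hp⟩ := hT W hW (S.op ⋙ unopUnop T)
  haveI : ∀ j, IsIso ((repConeHom W.w S L p).app j) := fun j =>
    (isIso_iff_bijective _).2 (repConeHom_app_bijective W.w S L p hp j)
  haveI : IsIso (repConeHom W.w S L p) := NatIso.isIso_of_isIso_app _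
  apply bij_of_comm
    (fun y => (wColim (unopUnop T ⋙ φ)).map (repConeHom W.w S L p)
      ((coyIso (unopUnop T ⋙ φ)).inv.app (op (op L)) y))
    (fun α => α ≫ (Functor.isoWhiskerLeft S.op (coyIso (unopUnop T ⋙ φ))).symm.hom)
    ((((wColim (unopUnop T ⋙ φ)).mapIso (asIso (repConeHom W.w S L p))).toEquiv.bijective).comp
      (((coyIso (unopUnop T ⋙ φ)).symm.app (op (op L))).toEquiv.bijective))
    ((compIsoEquiv (Functor.isoWhiskerLeft S.op (coyIso (unopUnop T ⋙ φ))).symm).bijective)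
    (hφ W hW (S.op ⋙ unopUnop T) L p hp)
  intro y
  ext d x
  have h1 : repConeHom W.w S L p ≫ wLimEval W.w (S.op ⋙ coyoneda) d x
      = coyoneda.map (Quiver.Hom.op (Quiver.Hom.op (p.app d x))) := by
    ext j f
    rfl
  show (wColim (unopUnop T ⋙ φ)).map (wLimEval W.w (S.op ⋙ coyoneda) d x)
      ((wColim (unopUnop T ⋙ φ)).map (repConeHom W.w S L p)
        ((coyIso (unopUnop T ⋙ φ)).inv.app (op (op L)) y)) = _
  rw [← FunctorToTypes.map_comp_apply, h1]
  exact (ConcreteCategory.congr_hom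
    ((coyIso (unopUnop T ⋙ φ)).inv.naturality (Quiver.Hom.op (Quiver.Hom.op (p.app d x)))) y).symm

end Aux3
section Aux4
variable {T : Type} [SmallCategory T]

/-- Tautological cocone: `φ(t)` as the `φ`-weighted colimit of representables. -/
def tautCocone (φ : T ⥤ Type) (t : T) :
    Cocone (elProj (unopUnop T ⋙ φ) ⋙ (coyoneda : Tᵒᵖ ⥤ T ⥤ Type).flip.obj t) where
  pt := φ.obj t
  ι :=
    { app := fun A => TypeCat.ofHom (fun g => φ.map g A.unop.2)
      naturality := fun A B m => by
        ext g
        dsimp [elProj] at g ⊢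
        exact (FunctorToTypes.map_comp_apply φ _ g _).trans (congrArg (φ.map g) m.unop.2) }

def tautCoconeIsColimit (φ : T ⥤ Type) (t : T) : IsColimit (tautCocone φ t) where
  desc s := TypeCat.ofHom (fun y => s.ι.app (op ((unopUnop T ⋙ φ).elementsMk (op (op t)) y)) (𝟙 t))
  fac s A := by
    ext g
    have hw := ConcreteCategory.congr_hom (s.w (Quiver.Hom.op
      (CategoryOfElements.homMk A.unop
        ((unopUnop T ⋙ φ).elementsMk (op (op t)) (φ.map g A.unop.2))
        (Quiver.Hom.op (Quiver.Hom.op g)) rfl))) (𝟙 t)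
    dsimp [elProj, tautCocone] at hw ⊢
    exact hw.symm.trans (congrArg (s.ι.app A) (Category.comp_id g))
  uniq s m hm := by
    ext y
    have h1 := ConcreteCategory.congr_hom (hm (op ((unopUnop T ⋙ φ).elementsMk (op (op t)) y))) (𝟙 t)
    dsimp [tautCocone] at h1
    have h2 : φ.map (𝟙 t) y = y := ConcreteCategory.congr_hom (φ.map_id t) y
    exact (congrArg (fun x => m x) h2.symm).trans h1

/-- coYoneda: every functor is the canonical colimit of representables. -/
noncomputable def tautIso (φ : T ⥤ Type) :
    pointwiseWColim (unopUnop T ⋙ φ) coyoneda ≅ φ :=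
  NatIso.ofComponents
    (fun t => colimit.isoColimitCocone ⟨tautCocone φ t, tautCoconeIsColimit φ t⟩)
    (by
      intro t t' u
      dsimp [pointwiseWColim, wColim]
      apply colimit.hom_ext
      intro A
      erw [ι_colimMap_assoc, colimit.isoColimitCocone_ι_hom,
        colimit.isoColimitCocone_ι_hom_assoc]
      ext g
      dsimp [tautCocone, elProj]
      exact FunctorToTypes.map_comp_apply φ g u _)

/-- The comparison with the pointwise weighted limit, for `H : J ⥤ T ⥤ Type`. -/
def limFlipHom {D J : Type} [SmallCategory D] [SmallCategory J]
    (ψ : Dᵒᵖ ⥤ Type) (G : Dᵒᵖ ⥤ T) (L : T) (p : ψ ⟶ G ⋙ coyoneda.obj (op L))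
    (H : J ⥤ T ⥤ Type) : H.flip.obj L ⟶ wLim ψ (G ⋙ H.flip) where
  app j := TypeCat.ofHom (fun z => wConeMap ψ G L p (H.obj j) z)
  naturality j j' v := by
    ext z
    apply NatTrans.ext
    ext d y
    exact (ConcreteCategory.congr_hom ((H.map v).naturality (p.app d y)) z).symm

end Aux4
/-- If `Ψ` is sound and `T` is a `Ψ`-theory, then every functor
`φ : T ⥤ Set` preserving `Ψ`-limits is `Ψ`-flat when regarded as a weight on `Tᵒᵖ`;
consequently `Ψ⁺(Tᵒᵖ) = Ψ-Alg(T)` as full subcategories of `[T, Set]`. -/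
theorem sound_implies_algebras_are_flat (Ψ : WeightClass) (hΨ : IsSound Ψ)
    (T : Type) [SmallCategory T] (hT : IsPsiTheory Ψ T) :
    (∀ φ : T ⥤ Type, PreservesPsiLimits Ψ φ → IsFlat Ψ (unopUnop T ⋙ φ)) ∧
    (∀ φ : T ⥤ Type, PsiPlusClosure Ψ T φ ↔ PreservesPsiLimits Ψ φ) := by
  refine ⟨fun φ => flat_of_preserves Ψ hΨ hT φ, fun φ => ⟨?_, ?_⟩⟩
  · intro h
    induction h with
    | rep t => exact fun Wψ hWψ G L p hp => hp t
    | @iso F₁ F₂ hF₁ hne ih =>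
      intro Wψ hWψ G L p hp
      obtain ⟨i⟩ := hne
      apply bij_of_comm (i.hom.app L) (fun α => α ≫ Functor.whiskerLeft G i.hom)
        ((i.app L).toEquiv.bijective)
        ((compIsoEquiv (Functor.isoWhiskerLeft G i)).bijective)
        (ih Wψ hWψ G L p hp)
      intro a
      ext d y
      exact (ConcreteCategory.congr_hom (i.hom.naturality (p.app d y)) a).symm
    | wcolim W' hW' H hH ih =>
      intro Wψ hWψ G L p hp
      haveI : ∀ j, IsIso ((limFlipHom Wψ.w G L p H).app j) := fun j =>
        (isIso_iff_bijective _).2 (ih j Wψ hWψ G L p hp)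
      haveI : IsIso (limFlipHom Wψ.w G L p H) := NatIso.isIso_of_isIso_app _
      have key : ∀ (d : Wψ.Dᵒᵖ) (y : Wψ.w.obj d),
          limFlipHom Wψ.w G L p H ≫ wLimEval Wψ.w (G ⋙ H.flip) d y
            = H.flip.map (p.app d y) := by
        intro d y
        ext j z
        rfl
      apply bij_of_comm ((wColim W'.w).map (inv (limFlipHom Wψ.w G L p H))) id
        (((wColim W'.w).mapIso (asIso (inv (limFlipHom Wψ.w G L p H)))).toEquiv.bijective)
        Function.bijective_id
        (hW' Wψ hWψ (G ⋙ H.flip))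
      intro a
      ext d y
      show (wColim W'.w).map (H.flip.map (p.app d y))
          ((wColim W'.w).map (inv (limFlipHom Wψ.w G L p H)) a) = _
      rw [← FunctorToTypes.map_comp_apply, ← key, IsIso.inv_hom_id_assoc]
      rfl
  · intro hφ
    exact PsiPlusClosure.iso
      (PsiPlusClosure.wcolim ⟨Tᵒᵖ, unopUnop T ⋙ φ⟩ (flat_of_preserves Ψ hΨ hT φ hφ)
        coyoneda (fun j => PsiPlusClosure.rep j.unop))
      ⟨tautIso φ⟩

end Paper
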